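/- (Proposition 1.) There exist finite sets 𝒮, 𝒮′, 𝒳₁, 𝒳₂, a probability distribution P on 𝒮 × 𝒳₁ × 𝒳₂ whose marginal on 𝒮 has full support, and a function f : 𝒮 → 𝒮′ such that, writing (X₁←S), (X₂←S) for the channels of conditional probabilities P(X₁=x₁ | S=s), P(X₂=x₂ | S=s) and (X₁←f(S)), (X₂←f(S)) for the channels of conditional probabilities P(X₁=x₁ | f(S)=t), P(X₂=x₂ | f(S)=t) on the range of f, the following three statements hold: (1) S and X₁ are conditionally independent given f(S), i.e. P(X₁=x₁ | S=s) = P(X₁=x₁ | f(S)=f(s)) for all s, x₁; (2) (X₁←f(S)) ⪯ (X₂←f(S)) and ¬((X₂←f(S)) ⪯ (X₁←f(S))); (3) ¬((X₁←S) ⪯ (X₂←S)). -/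

import Mathlib

open Finset

/-- A probability distribution on a finite set. -/
def IsDist {S : Type} [Fintype S] (p : S → ℝ) : Prop :=
  (∀ s, 0 ≤ p s) ∧ ∑ s, p s = 1

/-- A channel from `S` to `X`: a column-stochastic matrix. -/
def IsChannel {S X : Type} [Fintype S] [Fintype X] (κ : X → S → ℝ) : Prop :=
  (∀ x s, 0 ≤ κ x s) ∧ ∀ s, ∑ x, κ x s = 1

/-- `κ₁` is a garbling of `κ₂` (the Blackwell order `κ₁ ⪯ κ₂`). -/
def IsGarbling {S X₁ X₂ : Type} [Fintype S] [Fintype X₁] [Fintype X₂]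
    (κ₁ : X₁ → S → ℝ) (κ₂ : X₂ → S → ℝ) : Prop :=
  ∃ lam : X₁ → X₂ → ℝ, IsChannel lam ∧ ∀ x₁ s, κ₁ x₁ s = ∑ x₂, lam x₁ x₂ * κ₂ x₂ s

/-- Optimal expected utility: maximum over decision rules `d : X → A`. -/
noncomputable def optUtility {S X A : Type} [Fintype S] [Fintype X] [Fintype A]
    (p : S → ℝ) (u : A × S → ℝ) (κ : X → S → ℝ) : ℝ :=
  ⨆ d : X → A, ∑ s, ∑ x, p s * κ x s * u (d x, s)

/-- Mutual information between input (with distribution `p`) and output of channel `κ`;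
terms with `κ x s = 0` are taken to be `0`. -/
noncomputable def mutualInfo {S X : Type} [Fintype S] [Fintype X]
    (p : S → ℝ) (κ : X → S → ℝ) : ℝ :=
  ∑ s, ∑ x, if κ x s = 0 then 0 else
    p s * κ x s * Real.log (κ x s / ∑ s', p s' * κ x s')

/-- Channel composition: `(κ·λ) x s = ∑ t, κ x t * λ t s`. -/
def chanComp {S T X : Type} [Fintype S] [Fintype T] [Fintype X]
    (κ : X → T → ℝ) (lam : T → S → ℝ) : X → S → ℝ :=
  fun x s => ∑ t, κ x t * lam t s

/-- Marginal on `S` of a joint distribution on `S × X₁ × X₂`. -/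
noncomputable def margS3 {S X₁ X₂ : Type} [Fintype S] [Fintype X₁] [Fintype X₂]
    (P : S × X₁ × X₂ → ℝ) (s : S) : ℝ := ∑ x₁, ∑ x₂, P (s, x₁, x₂)

/-- The channel `X₁ ← S` of conditional probabilities `P(X₁ = x₁ | S = s)`. -/
noncomputable def chan1of3 {S X₁ X₂ : Type} [Fintype S] [Fintype X₁] [Fintype X₂]
    (P : S × X₁ × X₂ → ℝ) (x₁ : X₁) (s : S) : ℝ :=
  (∑ x₂, P (s, x₁, x₂)) / margS3 P s

/-- The channel `X₂ ← S` of conditional probabilities `P(X₂ = x₂ | S = s)`. -/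
noncomputable def chan2of3 {S X₁ X₂ : Type} [Fintype S] [Fintype X₁] [Fintype X₂]
    (P : S × X₁ × X₂ → ℝ) (x₂ : X₂) (s : S) : ℝ :=
  (∑ x₁, P (s, x₁, x₂)) / margS3 P s

/-- Pushforward of a joint distribution on `S × X₁ × X₂` along `f : S → S'`. -/
noncomputable def push3 {S S' X₁ X₂ : Type} [Fintype S] [Fintype X₁] [Fintype X₂]
    [DecidableEq S'] (f : S → S') (P : S × X₁ × X₂ → ℝ) : S' × X₁ × X₂ → ℝ :=
  fun q => ∑ s ∈ Finset.univ.filter (fun s => f s = q.1), P (s, q.2.1, q.2.2)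


noncomputable def Pex : Fin 3 × Fin 2 × Fin 2 → ℝ := fun q =>
  ![![![(1:ℝ)/3, 0], ![0, 0]],
    ![![0, 1/6], ![0, 1/6]],
    ![![1/12, 1/12], ![1/12, 1/12]]] q.1 q.2.1 q.2.2

def fex : Fin 3 → Fin 2 := ![0, 1, 1]

lemma cp1_val : ∀ x t, chan1of3 (push3 fex Pex) x t = ![![(1:ℝ), 1/2], ![0, 1/2]] x t := by
  intro x t
  fin_cases x <;> fin_cases t <;>
    simp only [chan1of3, margS3, push3, Finset.sum_filter, Fin.sum_univ_two, Fin.sum_univ_three] <;>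
    norm_num [Pex, fex, Matrix.cons_val_two]

lemma cp2_val : ∀ x t, chan2of3 (push3 fex Pex) x t = ![![(1:ℝ), 1/4], ![0, 3/4]] x t := by
  intro x t
  fin_cases x <;> fin_cases t <;>
    simp only [chan2of3, margS3, push3, Finset.sum_filter, Fin.sum_univ_two, Fin.sum_univ_three] <;>
    norm_num [Pex, fex, Matrix.cons_val_two]

lemma c1_val : ∀ x s, chan1of3 Pex x s = ![![(1:ℝ), 1/2, 1/2], ![0, 1/2, 1/2]] x s := by
  intro x s
  fin_cases x <;> fin_cases s <;>
    norm_num [chan1of3, margS3, Pex, Fin.sum_univ_two, Fin.sum_univ_three]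

lemma c2_val : ∀ x s, chan2of3 Pex x s = ![![(1:ℝ), 0, 1/2], ![0, 1, 1/2]] x s := by
  intro x s
  fin_cases x <;> fin_cases s <;>
    norm_num [chan2of3, margS3, Pex, Fin.sum_univ_two, Fin.sum_univ_three]

/-- Proposition 1: there exist finite sets, a joint distribution `P` of
`(S, X₁, X₂)` whose marginal on `S` has full support, and a surjective coarse-graining
`f : S → S'` such that (1) `S` and `X₁` are conditionally independent given `f(S)`;
(2) `(X₁ ← f(S)) ≺ (X₂ ← f(S))` strictly; (3) `¬((X₁ ← S) ⪯ (X₂ ← S))`. -/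
theorem prop1_coarse_graining_paradox :
    ∃ (nS nS' n1 n2 : ℕ) (P : Fin nS × Fin n1 × Fin n2 → ℝ) (f : Fin nS → Fin nS'),
      (∀ q, 0 ≤ P q) ∧ (∑ q, P q = 1) ∧ (∀ s, 0 < margS3 P s) ∧
      Function.Surjective f ∧
      -- (1) S and X₁ are conditionally independent given f(S)
      (∀ s x₁, chan1of3 P x₁ s = chan1of3 (push3 f P) x₁ (f s)) ∧
      -- (2) (X₁ ← f(S)) ≺ (X₂ ← f(S))
      IsGarbling (chan1of3 (push3 f P)) (chan2of3 (push3 f P)) ∧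
      ¬ IsGarbling (chan2of3 (push3 f P)) (chan1of3 (push3 f P)) ∧
      -- (3) ¬((X₁ ← S) ⪯ (X₂ ← S))
      ¬ IsGarbling (chan1of3 P) (chan2of3 P) := by
  refine ⟨3, 2, 2, 2, Pex, fex, ?_, ?_, ?_, ?_, ?_, ?_, ?_, ?_⟩
  · rintro ⟨s, x₁, x₂⟩
    fin_cases s <;> fin_cases x₁ <;> fin_cases x₂ <;> norm_num [Pex]
  · simp only [Fintype.sum_prod_type, Fin.sum_univ_three, Fin.sum_univ_two, Pex]
    norm_num [Matrix.cons_val_two]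
  · intro s
    fin_cases s <;> norm_num [margS3, Pex, Fin.sum_univ_two]
  · intro t
    fin_cases t
    · exact ⟨0, rfl⟩
    · exact ⟨1, rfl⟩
  · intro s x₁
    rw [c1_val, cp1_val]
    fin_cases s <;> fin_cases x₁ <;> norm_num [fex]
  · refine ⟨fun x₁ x₂ => ![![(1:ℝ), 1/3], ![0, 2/3]] x₁ x₂, ⟨?_, ?_⟩, ?_⟩
    · intro x₁ x₂
      fin_cases x₁ <;> fin_cases x₂ <;> norm_num
    · intro x₂
      fin_cases x₂ <;> norm_num [Fin.sum_univ_two]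
    · intro x₁ t
      rw [cp1_val]
      simp only [Fin.sum_univ_two, cp2_val]
      fin_cases x₁ <;> fin_cases t <;> norm_num
  · rintro ⟨lam, ⟨hnn, hsum⟩, heq⟩
    have e0 := heq 1 0
    have e1 := heq 1 1
    have hs := hsum 1
    have h01 := hnn 0 1
    simp only [cp1_val, cp2_val, Fin.sum_univ_two] at e0 e1 hs
    norm_num at e0 e1
    linarith
  · rintro ⟨lam, ⟨hnn, hsum⟩, heq⟩
    have e0 := heq 1 0
    have e1 := heq 1 1
    have e2 := heq 1 2
    simp only [c1_val, c2_val, Fin.sum_univ_two] at e0 e1 e2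
    norm_num [Matrix.cons_val_two] at e0 e1 e2
    linarith
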